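/- Let n = 2km with k odd, m ≥ 2, and let L' be the latin square obtained from B_n by replacing, for each j with 0 ≤ j < 2k, the symbols in cells (0, jm) and (m, jm) with each other (i.e., L'[0][jm] = m + jm mod n and L'[m][jm] = jm mod n, and L' agrees with B_n elsewhere). Then L' has no k'-plex for any odd k' < k. -/

import Mathlib

open scoped Classical

/-- A latin square of order `n`: each symbol occurs exactly once in each row and column. -/
def IsLatinSquare {n : ℕ} (L : Fin n → Fin n → Fin n) : Prop :=
  (∀ i, Function.Bijective fun j => L i j) ∧ (∀ j, Function.Bijective fun i => L i j)

/-- A `k`-plex of `L`: a set of cells with exactly `k` in each row, `k` in each column,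
and each symbol occurring exactly `k` times. -/
def IsPlex {n : ℕ} (L : Fin n → Fin n → Fin n) (k : ℕ) (K : Finset (Fin n × Fin n)) : Prop :=
  (∀ i, (K.filter fun p => p.1 = i).card = k) ∧
  (∀ j, (K.filter fun p => p.2 = j).card = k) ∧
  (∀ s, (K.filter fun p => L p.1 p.2 = s).card = k)

/-- `L` has a transversal, i.e. a `1`-plex. -/
def HasTransversal {n : ℕ} (L : Fin n → Fin n → Fin n) : Prop :=
  ∃ K, IsPlex L 1 K

/-- The latin square obtained from `Bₙ` by swapping the two symbols in cells
`(0, jm)` and `(m, jm)` for `0 ≤ j < 2k` (the columns are exactly the multiples of `m`). -/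
def swappedSquare (k m n : ℕ) [NeZero n] : Fin n → Fin n → Fin n := fun i j =>
  if ((i : ℕ) = 0 ∨ (i : ℕ) = m) ∧ m ∣ (j : ℕ) then
    (if (i : ℕ) = 0 then ((Fin.ofNat n m) + j) else j)
  else i + j

private lemma plex_fiber_sum {n : ℕ} (K : Finset (Fin n × Fin n)) (φ : Fin n × Fin n → Fin n)
    (k' : ℕ) (h : ∀ s, (K.filter fun p => φ p = s).card = k') (f : Fin n → ZMod n) :
    ∑ p ∈ K, f (φ p) = k' • ∑ s, f s := by
  rw [← Finset.sum_fiberwise' K φ f, Finset.smul_sum]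
  exact Finset.sum_congr rfl fun s _ => by rw [Finset.sum_const, h]

theorem stmt12 (k m n : ℕ) [NeZero n] (hk : Odd k) (hm : 2 ≤ m)
    (hn : n = 2 * k * m) :
    ∀ k', Odd k' → k' < k → ¬ ∃ K, IsPlex (swappedSquare k m n) k' K := by
  intro k' hk' hlt ⟨K, hrow, hcol, hsym⟩
  have hk1 : 1 ≤ k := hk.pos
  have hmn : m < n := by nlinarith
  have hn1 : 1 ≤ n := by omega
  set f : Fin n → ZMod n := fun s => ((s : ℕ) : ZMod n) with hf
  -- cast helpers
  have hcast : ∀ a b : Fin n, f (a + b) = f a + f b := by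
    intro a b
    simp only [hf, Fin.val_add, ZMod.natCast_mod, Nat.cast_add]
  have hmcast : f (Fin.ofNat n m) = (m : ZMod n) := by
    simp only [hf, Fin.val_ofNat, ZMod.natCast_mod]
  -- the symbol sum S
  set S : ZMod n := ∑ s, f s with hS
  have hSval : S = -((k * m : ℕ) : ZMod n) := by
    have hsum : (∑ i ∈ Finset.range n, i) = k * m * (n - 1) := by
      have h2 : (∑ i ∈ Finset.range n, i) * 2 = n * (n - 1) :=
        Finset.sum_range_id_mul_two n
      have h3 : n * (n - 1) = (k * m * (n - 1)) * 2 := by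
        rw [hn]; ring
      omega
    have : S = (((∑ i ∈ Finset.range n, i : ℕ)) : ZMod n) := by
      rw [hS, Nat.cast_sum]
      exact (Fin.sum_univ_eq_sum_range (fun i => ((i : ℕ) : ZMod n)) n).symm ▸ rfl
    rw [this, hsum, Nat.cast_mul, Nat.cast_sub hn1, ZMod.natCast_self]
    push_cast
    ring
  -- total sum via plex structure
  have hTotal : ∑ p ∈ K, (f (swappedSquare k m n p.1 p.2) - f p.1 - f p.2)
      = -(k' • S) := by
    rw [Finset.sum_sub_distrib, Finset.sum_sub_distrib]
    rw [plex_fiber_sum K _ k' hsym f, plex_fiber_sum K _ k' hrow f,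
      plex_fiber_sum K _ k' hcol f]
    abel
  -- pointwise value of the summand
  set P1 : Fin n × Fin n → Prop := fun p => (p.1 : ℕ) = 0 ∧ m ∣ (p.2 : ℕ) with hP1
  set P2 : Fin n × Fin n → Prop := fun p => (p.1 : ℕ) = m ∧ m ∣ (p.2 : ℕ) with hP2
  have hpt : ∀ p : Fin n × Fin n,
      f (swappedSquare k m n p.1 p.2) - f p.1 - f p.2
        = (if P1 p then (m : ZMod n) else 0) + (if P2 p then -(m : ZMod n) else 0) := by
    intro p
    have hm0 : (0 : ℕ) ≠ m := by omega
    by_cases h1 : P1 p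
    · have hcond : ((p.1 : ℕ) = 0 ∨ (p.1 : ℕ) = m) ∧ m ∣ (p.2 : ℕ) :=
        ⟨Or.inl h1.1, h1.2⟩
      have h2 : ¬ P2 p := by rw [hP2]; rw [hP1] at h1; omega
      simp only [swappedSquare, if_pos hcond, if_pos h1.1, if_pos h1, if_neg h2]
      rw [hcast]
      have : f p.1 = 0 := by simp only [hf, h1.1, Nat.cast_zero]
      rw [hmcast, this]
      ring
    · by_cases h2 : P2 p
      · have hcond : ((p.1 : ℕ) = 0 ∨ (p.1 : ℕ) = m) ∧ m ∣ (p.2 : ℕ) :=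
          ⟨Or.inr h2.1, h2.2⟩
        have hne : ¬ (p.1 : ℕ) = 0 := by rw [hP2] at h2; omega
        simp only [swappedSquare, if_pos hcond, if_neg hne, if_neg h1, if_pos h2]
        have : f p.1 = (m : ZMod n) := by simp only [hf, h2.1]
        rw [this]
        ring
      · have hcond : ¬ (((p.1 : ℕ) = 0 ∨ (p.1 : ℕ) = m) ∧ m ∣ (p.2 : ℕ)) := by
          rw [hP1] at h1; rw [hP2] at h2; tauto
        simp only [swappedSquare, if_neg hcond, if_neg h1, if_neg h2]
        rw [hcast]
        ring
  -- hence the total sum equals a•m − b•m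
  set a : ℕ := (K.filter P1).card with ha
  set b : ℕ := (K.filter P2).card with hb
  have hTotal2 : ∑ p ∈ K, (f (swappedSquare k m n p.1 p.2) - f p.1 - f p.2)
      = (a : ZMod n) * m - (b : ZMod n) * m := by
    calc ∑ p ∈ K, (f (swappedSquare k m n p.1 p.2) - f p.1 - f p.2)
        = ∑ p ∈ K, ((if P1 p then (m : ZMod n) else 0)
            + (if P2 p then -(m : ZMod n) else 0)) :=
          Finset.sum_congr rfl fun p _ => hpt p
      _ = (∑ p ∈ K, if P1 p then (m : ZMod n) else 0)
            + (∑ p ∈ K, if P2 p then -(m : ZMod n) else 0) := Finset.sum_add_distrib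
      _ = (a : ZMod n) * m - (b : ZMod n) * m := by
          rw [← Finset.sum_filter, ← Finset.sum_filter, Finset.sum_const, Finset.sum_const,
            ← ha, ← hb, nsmul_eq_mul, nsmul_eq_mul]
          ring
  -- k' odd kills the coefficient
  have hodd : -(k' • S) = ((k * m : ℕ) : ZMod n) := by
    obtain ⟨t, ht⟩ := hk'
    rw [hSval, ht]
    have : ((2 * t + 1) : ℕ) • (-((k * m : ℕ) : ZMod n))
        = -(((2 * t + 1) * (k * m) : ℕ) : ZMod n) := by
      push_cast
      rw [nsmul_eq_mul]
      push_cast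
      ring
    rw [this, neg_neg]
    have h2 : ((2 * t + 1) * (k * m) : ℕ) = t * n + k * m := by rw [hn]; ring
    rw [h2, Nat.cast_add, Nat.cast_mul, ZMod.natCast_self, mul_zero, zero_add]
  -- the key congruence over ℤ
  have hzero : ((((a : ℤ) * m - (b : ℤ) * m - (k : ℤ) * m) : ℤ) : ZMod n) = 0 := by
    have := hTotal.symm.trans hTotal2
    push_cast
    rw [hodd] at this
    push_cast at this
    linear_combination -this
  rw [ZMod.intCast_zmod_eq_zero_iff_dvd] at hzero
  obtain ⟨c, hc⟩ := hzero
  have hc' : (a : ℤ) - b - k = 2 * k * c := by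
    have hm0 : (m : ℤ) ≠ 0 := by positivity
    have : ((a : ℤ) - b - k) * m = (2 * k * c) * m := by
      rw [hn] at hc; push_cast at hc ⊢; linarith
    exact mul_right_cancel₀ hm0 this
  -- bounds on a and b
  have hma : a ≤ k' := by
    have h0 : (0 : ℕ) < n := Nat.pos_of_ne_zero (NeZero.ne n)
    rw [ha, ← hrow ⟨0, h0⟩]
    apply Finset.card_le_card
    intro p hp
    rw [Finset.mem_filter] at hp ⊢
    exact ⟨hp.1, Fin.ext hp.2.1⟩
  have hmb : b ≤ k' := by
    rw [hb, ← hrow ⟨m, hmn⟩]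
    apply Finset.card_le_card
    intro p hp
    rw [Finset.mem_filter] at hp ⊢
    exact ⟨hp.1, Fin.ext hp.2.1⟩
  -- contradiction
  have hka : (a : ℤ) ≤ k' := by exact_mod_cast hma
  have hkb : (b : ℤ) ≤ k' := by exact_mod_cast hmb
  have hkk : (k' : ℤ) < k := by exact_mod_cast hlt
  have hbn : (0 : ℤ) ≤ b := Int.natCast_nonneg b
  have han : (0 : ℤ) ≤ a := Int.natCast_nonneg a
  have hkz : (1 : ℤ) ≤ k := by exact_mod_cast hk1
  rcases le_or_gt 0 c with hcpos | hcneg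
  · nlinarith
  · have : c ≤ -1 := by omega
    nlinarith
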